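/- There are N balls of which M are red; set p = M/N. A sample of n balls is drawn uniformly at random without replacement, and X is the number of red balls in the sample. For every δ with 0 ≤ δ ≤ 1: Pr[X ≥ (1+δ)pn] ≤ exp(−δ²pn/3) and Pr[X ≤ (1−δ)pn] ≤ exp(−δ²pn/2). -/

import Mathlib

open Finset

-- descending factorial ratio bound
lemma descFact_mul_pow_le {M N : ℕ} (h : M ≤ N) (k : ℕ) :
    M.descFactorial k * N ^ k ≤ N.descFactorial k * M ^ k := by
  induction k with
  | zero => simp
  | succ k ih =>
    rw [Nat.descFactorial_succ, Nat.descFactorial_succ, pow_succ, pow_succ]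
    have h1 : (M - k) * N ≤ (N - k) * M := by
      rw [Nat.sub_mul, Nat.sub_mul]
      exact tsub_le_tsub (le_of_eq (Nat.mul_comm M N)) (Nat.mul_le_mul_left k h)
    calc (M - k) * M.descFactorial k * (N ^ k * N)
        = ((M - k) * N) * (M.descFactorial k * N ^ k) := by ring
      _ ≤ ((N - k) * M) * (N.descFactorial k * M ^ k) := Nat.mul_le_mul h1 ih
      _ = (N - k) * N.descFactorial k * (M ^ k * M) := by ring

lemma choose_mul_pow_le {M N : ℕ} (h : M ≤ N) (k : ℕ) :
    M.choose k * N ^ k ≤ N.choose k * M ^ k := by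
  have h2 := descFact_mul_pow_le h k
  rw [Nat.descFactorial_eq_factorial_mul_choose, Nat.descFactorial_eq_factorial_mul_choose,
    Nat.mul_assoc, Nat.mul_assoc] at h2
  exact Nat.le_of_mul_le_mul_left h2 (Nat.factorial_pos k)

-- number of n-subsets of U containing a fixed T
lemma card_filter_supset {U T : Finset ℕ} {n : ℕ} (hT : T ⊆ U) (hk : T.card ≤ n) :
    ((U.powersetCard n).filter (fun s => T ⊆ s)).card = (U.card - T.card).choose (n - T.card) := by
  classical
  rw [← card_sdiff_of_subset hT, ← Finset.card_powersetCard (n - T.card) (U \ T)]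
  apply Finset.card_nbij' (fun s => s \ T) (fun t => t ∪ T)
  · intro s hs
    simp only [mem_coe, mem_filter, mem_powersetCard] at hs
    obtain ⟨⟨hsU, hsc⟩, hTs⟩ := hs
    simp only [mem_coe, mem_powersetCard]
    constructor
    · exact sdiff_subset_sdiff hsU (le_refl T)
    · rw [card_sdiff_of_subset hTs, hsc]
  · intro t ht
    simp only [mem_coe, mem_powersetCard] at ht
    obtain ⟨htU, htc⟩ := ht
    have hdisj : Disjoint t T := (sdiff_disjoint.mono_left htU)
    simp only [mem_coe, mem_filter, mem_powersetCard]
    refine ⟨⟨union_subset (htU.trans (sdiff_subset)) hT, ?_⟩, subset_union_right⟩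
    rw [card_union_of_disjoint hdisj, htc]
    omega
  · intro s hs
    simp only [mem_coe, mem_filter, mem_powersetCard] at hs
    exact sdiff_union_of_subset hs.2
  · intro t ht
    simp only [mem_coe, mem_powersetCard] at ht
    have hdisj : Disjoint t T := (sdiff_disjoint.mono_left ht.1)
    exact union_sdiff_cancel_right hdisj
lemma sum_choose_inter {U R : Finset ℕ} (hR : R ⊆ U) {n k : ℕ} (hk : k ≤ n) :
    ∑ s ∈ U.powersetCard n, ((s ∩ R).card.choose k)
      = R.card.choose k * (U.card - k).choose (n - k) := by
  classical
  have step1 : ∀ s ∈ U.powersetCard n, (s ∩ R).card.choose k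
      = ((R.powersetCard k).filter (fun T => T ⊆ s)).card := by
    intro s _
    rw [← Finset.card_powersetCard k (s ∩ R)]
    congr 1
    ext T
    simp only [mem_powersetCard, mem_filter, subset_inter_iff]
    tauto
  rw [Finset.sum_congr rfl step1]
  simp_rw [Finset.card_filter]
  rw [Finset.sum_comm]
  have step2 : ∀ T ∈ R.powersetCard k,
      (∑ s ∈ U.powersetCard n, if T ⊆ s then 1 else 0) = (U.card - k).choose (n - k) := by
    intro T hT
    rw [mem_powersetCard] at hT
    rw [← Finset.card_filter]
    rw [card_filter_supset (hT.1.trans hR) (le_of_eq_of_le (by rw [hT.2]) hk), hT.2]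
  rw [Finset.sum_congr rfl step2, Finset.sum_const, Finset.card_powersetCard, smul_eq_mul]
lemma choose_ratio_le {m N n k : ℕ} (hm : m ≤ N) (hk : k ≤ n) (hn : n ≤ N) :
    (m.choose k : ℝ) * ((N - k).choose (n - k) : ℝ)
      ≤ (n.choose k : ℝ) * ((m : ℝ) / N) ^ k * (N.choose n : ℝ) := by
  rcases Nat.eq_zero_or_pos N with h0 | hNpos
  · subst h0
    interval_cases m
    interval_cases n
    interval_cases k
    simp
  have hnat : m.choose k * (N - k).choose (n - k) * N ^ k ≤ n.choose k * m ^ k * N.choose n := by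
    calc m.choose k * (N - k).choose (n - k) * N ^ k
        = (m.choose k * N ^ k) * (N - k).choose (n - k) := by ring
      _ ≤ (N.choose k * m ^ k) * (N - k).choose (n - k) :=
          Nat.mul_le_mul_right _ (choose_mul_pow_le hm k)
      _ = (N.choose k * (N - k).choose (n - k)) * m ^ k := by ring
      _ = (N.choose n * n.choose k) * m ^ k := by rw [← Nat.choose_mul (n := N) hk]
      _ = n.choose k * m ^ k * N.choose n := by ring
  have hNpow : (0:ℝ) < (N:ℝ) ^ k := by positivity
  have h2 : (m.choose k : ℝ) * ((N - k).choose (n - k) : ℝ)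
      ≤ ((n.choose k * m ^ k * N.choose n : ℕ) : ℝ) / (N:ℝ) ^ k := by
    rw [le_div_iff₀ hNpow]
    exact_mod_cast hnat
  refine h2.trans (le_of_eq ?_)
  push_cast
  rw [div_pow]
  ring

lemma mgf_bound {U R : Finset ℕ} (hR : R ⊆ U) {n : ℕ} (hn : n ≤ U.card)
    (μ : ℝ) (hμ : 0 ≤ μ) :
    ∑ s ∈ U.powersetCard n, (1 + μ) ^ (s ∩ R).card
      ≤ (U.card.choose n : ℝ) * (1 + ((R.card : ℝ) / U.card) * μ) ^ n := by
  classical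
  have hcard : ∀ s ∈ U.powersetCard n, (s ∩ R).card ≤ n := by
    intro s hs
    rw [mem_powersetCard] at hs
    exact le_trans (card_le_card inter_subset_left) (le_of_eq hs.2)
  have expand : ∀ s ∈ U.powersetCard n, (1 + μ) ^ (s ∩ R).card
      = ∑ k ∈ Finset.range (n+1), ((s ∩ R).card.choose k : ℝ) * μ ^ k := by
    intro s hs
    rw [add_comm (1:ℝ) μ, add_pow]
    rw [← Finset.sum_subset (Finset.range_subset_range.2 (Nat.succ_le_succ (hcard s hs)))]
    · exact Finset.sum_congr rfl fun k _ => by rw [one_pow, mul_one, mul_comm]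
    · intro k hk hknot
      simp only [Finset.mem_range, Nat.lt_succ_iff, not_le, not_lt] at hk hknot
      rw [Nat.choose_eq_zero_of_lt hknot]
      simp
  calc ∑ s ∈ U.powersetCard n, (1 + μ) ^ (s ∩ R).card
      = ∑ k ∈ Finset.range (n+1), ∑ s ∈ U.powersetCard n,
          ((s ∩ R).card.choose k : ℝ) * μ ^ k := by
        rw [← Finset.sum_comm]
        exact Finset.sum_congr rfl expand
    _ = ∑ k ∈ Finset.range (n+1),
          ((R.card.choose k * (U.card - k).choose (n-k) : ℕ) : ℝ) * μ ^ k := by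
        refine Finset.sum_congr rfl fun k hk => ?_
        rw [Finset.mem_range, Nat.lt_succ_iff] at hk
        rw [← Finset.sum_mul, ← Nat.cast_sum, sum_choose_inter hR hk]
    _ ≤ ∑ k ∈ Finset.range (n+1), (U.card.choose n : ℝ) *
          ((((R.card : ℝ) / U.card) * μ) ^ k * (n.choose k : ℝ)) := by
        apply Finset.sum_le_sum
        intro k hk
        rw [Finset.mem_range, Nat.lt_succ_iff] at hk
        have h3 := choose_ratio_le (card_le_card hR) hk hn
        have h4 := mul_le_mul_of_nonneg_right h3 (pow_nonneg hμ k)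
        push_cast at h4 ⊢
        calc (R.card.choose k : ℝ) * ((U.card - k).choose (n-k) : ℝ) * μ ^ k
            ≤ (n.choose k : ℝ) * ((R.card : ℝ) / U.card) ^ k * (U.card.choose n : ℝ) * μ ^ k := h4
          _ = (U.card.choose n : ℝ) *
              ((((R.card : ℝ) / U.card) * μ) ^ k * (n.choose k : ℝ)) := by
              rw [mul_pow]; ring
    _ = (U.card.choose n : ℝ) * (1 + ((R.card : ℝ) / U.card) * μ) ^ n := by
        rw [← Finset.mul_sum]
        congr 1
        rw [add_comm (1:ℝ), add_pow]
        exact (Finset.sum_congr rfl fun k _ => by rw [one_pow, mul_one]).symm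
lemma exp_mgf_bound {N n : ℕ} (hn : n ≤ N) {R : Finset ℕ} (hR : R ⊆ Finset.range N)
    (t : ℝ) (ht : 0 ≤ t) :
    ∑ s ∈ (Finset.range N).powersetCard n, Real.exp (t * ((s ∩ R).card : ℝ))
      ≤ (N.choose n : ℝ) * (1 + ((R.card : ℝ) / N) * (Real.exp t - 1)) ^ n := by
  have h1 : ∀ s ∈ (Finset.range N).powersetCard n,
      Real.exp (t * ((s ∩ R).card : ℝ)) = (1 + (Real.exp t - 1)) ^ (s ∩ R).card := by
    intro s _
    rw [add_sub_cancel, mul_comm, Real.exp_nat_mul]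
  rw [Finset.sum_congr rfl h1]
  have := mgf_bound hR (n := n) (by rw [Finset.card_range]; exact hn)
    (Real.exp t - 1) (by nlinarith [Real.add_one_le_exp t])
  rwa [Finset.card_range] at this

lemma markov_exp {Ω : Finset (Finset ℕ)} (f : Finset ℕ → ℝ) (g : Finset ℕ → Prop)
    [DecidablePred g] (c : ℝ) (h : ∀ s ∈ Ω.filter g, c ≤ f s) :
    ((Ω.filter g).card : ℝ) * Real.exp c ≤ ∑ s ∈ Ω, Real.exp (f s) :=
  calc ((Ω.filter g).card : ℝ) * Real.exp c = ∑ _s ∈ Ω.filter g, Real.exp c := by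
        rw [Finset.sum_const, nsmul_eq_mul]
    _ ≤ ∑ s ∈ Ω.filter g, Real.exp (f s) :=
        Finset.sum_le_sum fun s hs => Real.exp_le_exp.2 (h s hs)
    _ ≤ ∑ s ∈ Ω, Real.exp (f s) :=
        Finset.sum_le_sum_of_subset_of_nonneg (Finset.filter_subset _ _)
          fun _ _ _ => (Real.exp_pos _).le

set_option maxHeartbeats 2000000 in
theorem hypergeometric_concentration (N M n : ℕ) (hN : 0 < N) (hM : M ≤ N)
    (hn : n ≤ N) (δ : ℝ) (hδ0 : 0 ≤ δ) (hδ1 : δ ≤ 1) :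
    (((((Finset.range N).powersetCard n).filter
        (fun s => (1 + δ) * ((M : ℝ) / N) * n ≤ ((s ∩ Finset.range M).card : ℝ))).card : ℝ)
        / (((Finset.range N).powersetCard n).card : ℝ)
      ≤ Real.exp (-(δ ^ 2 * ((M : ℝ) / N) * n) / 3)) ∧
    (((((Finset.range N).powersetCard n).filter
        (fun s => ((s ∩ Finset.range M).card : ℝ) ≤ (1 - δ) * ((M : ℝ) / N) * n)).card : ℝ)
        / (((Finset.range N).powersetCard n).card : ℝ)
      ≤ Real.exp (-(δ ^ 2 * ((M : ℝ) / N) * n) / 2)) := by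
  classical
  have hN0 : (0:ℝ) < N := by exact_mod_cast hN
  have hΩ : (((Finset.range N).powersetCard n).card : ℝ) = (N.choose n : ℝ) := by
    rw [Finset.card_powersetCard, Finset.card_range]
  have hD : (0:ℝ) < (((Finset.range N).powersetCard n).card : ℝ) := by
    rw [hΩ]; exact_mod_cast Nat.choose_pos hn
  have hRM : Finset.range M ⊆ Finset.range N := Finset.range_subset_range.2 hM
  have hp0 : (0:ℝ) ≤ (M:ℝ)/N := by positivity
  have hp1 : (M:ℝ)/N ≤ 1 := by rw [div_le_one hN0]; exact_mod_cast hM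
  have hpn : (0:ℝ) ≤ (M:ℝ)/N * n := by positivity
  constructor
  · -- upper tail
    obtain ⟨t, htdef⟩ : ∃ t:ℝ, t = 3*δ/(3+δ) := ⟨_, rfl⟩
    have h3δ : (0:ℝ) < 3 + δ := by linarith
    have ht0 : 0 ≤ t := by rw [htdef]; positivity
    have ht1 : t ≤ 1 := by rw [htdef, div_le_one h3δ]; linarith
    have hmark := markov_exp (Ω := (Finset.range N).powersetCard n)
      (fun s => t * ((s ∩ Finset.range M).card : ℝ))
      (fun s => (1 + δ) * ((M : ℝ) / N) * n ≤ ((s ∩ Finset.range M).card : ℝ))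
      (t * ((1 + δ) * ((M : ℝ) / N) * n))
      (fun s hs => mul_le_mul_of_nonneg_left (Finset.mem_filter.1 hs).2 ht0)
    have hmgf := exp_mgf_bound hn hRM t ht0
    rw [Finset.card_range] at hmgf
    -- (1 + p μ)^n ≤ exp (n * (p * μ))
    have hbase : 1 + (M:ℝ)/N * (Real.exp t - 1) ≤ Real.exp ((M:ℝ)/N * (Real.exp t - 1)) := by
      nlinarith [Real.add_one_le_exp ((M:ℝ)/N * (Real.exp t - 1))]
    have hbase0 : (0:ℝ) ≤ 1 + (M:ℝ)/N * (Real.exp t - 1) := by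
      nlinarith [Real.add_one_le_exp t, Real.exp_pos t]
    have hpow : (1 + (M:ℝ)/N * (Real.exp t - 1)) ^ n
        ≤ Real.exp ((n:ℝ) * ((M:ℝ)/N * (Real.exp t - 1))) := by
      rw [Real.exp_nat_mul]
      exact pow_le_pow_left₀ hbase0 hbase n
    -- analytic key
    have hexp : Real.exp t ≤ 1 + t + t^2/2 + t^3*(2/9) := by
      have h := Real.exp_bound' ht0 ht1 (n := 3) (by norm_num)
      rw [Finset.sum_range_succ, Finset.sum_range_succ, Finset.sum_range_succ,
        Finset.sum_range_zero] at h
      norm_num [Nat.factorial] at h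
      linarith
    have hG : t^2/2 + t^3*(2/9) - t*δ + δ^2/3
        = δ^2*(2*δ^3 + 9*δ - 27)/(6*(3+δ)^3) := by
      rw [htdef]; field_simp; ring
    have hδ3 : δ^3 ≤ 1 := pow_le_one₀ hδ0 hδ1
    have hGle : δ^2*(2*δ^3 + 9*δ - 27)/(6*(3+δ)^3) ≤ 0 := by
      apply div_nonpos_of_nonpos_of_nonneg
      · nlinarith [hδ3, hδ1, sq_nonneg δ]
      · positivity
    have hG2 : t^2/2 + t^3*(2/9) - t*δ + δ^2/3 ≤ 0 := by rw [hG]; exact hGle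
    have key : (Real.exp t - 1) - t*(1+δ) + δ^2/3 ≤ 0 := by
      have hexpand : t*(1+δ) = t + t*δ := by ring
      linarith [hexp, hG2]
    -- assemble
    rw [div_le_iff₀ hD, hΩ]
    have hkeyn : (n:ℝ) * ((M:ℝ)/N * (Real.exp t - 1))
        ≤ -(δ ^ 2 * ((M : ℝ) / N) * n) / 3 + t * ((1 + δ) * ((M : ℝ) / N) * n) := by
      have h10 : ((M:ℝ)/N * n) * ((Real.exp t - 1) - t*(1+δ) + δ^2/3) ≤ 0 :=
        mul_nonpos_of_nonneg_of_nonpos hpn key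
      have h12 : ((M:ℝ)/N * n) * ((Real.exp t - 1) - t*(1+δ) + δ^2/3)
          = (n:ℝ)*((M:ℝ)/N*(Real.exp t - 1)) - t*((1+δ)*((M:ℝ)/N)*n)
            + (δ^2*((M:ℝ)/N)*n)/3 := by ring
      linarith [h10, h12]
    have hchoose0 : (0:ℝ) < (N.choose n : ℝ) := by exact_mod_cast Nat.choose_pos hn
    have hexpa : (0:ℝ) < Real.exp (t * ((1 + δ) * ((M : ℝ) / N) * n)) := Real.exp_pos _
    have h11 : (N.choose n:ℝ) * Real.exp ((n:ℝ)*((M:ℝ)/N*(Real.exp t - 1)))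
        ≤ (Real.exp (-(δ^2*((M:ℝ)/N)*n)/3) * (N.choose n:ℝ))
            * Real.exp (t*((1+δ)*((M:ℝ)/N)*n)) := by
      calc (N.choose n:ℝ) * Real.exp ((n:ℝ)*((M:ℝ)/N*(Real.exp t - 1)))
          ≤ (N.choose n:ℝ) * Real.exp (-(δ^2*((M:ℝ)/N)*n)/3 + t*((1+δ)*((M:ℝ)/N)*n)) :=
            mul_le_mul_of_nonneg_left (Real.exp_le_exp.2 hkeyn) hchoose0.le
        _ = (Real.exp (-(δ^2*((M:ℝ)/N)*n)/3) * (N.choose n:ℝ))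
            * Real.exp (t*((1+δ)*((M:ℝ)/N)*n)) := by rw [Real.exp_add]; ring
    have hfinal : (((((Finset.range N).powersetCard n).filter
        (fun s => (1 + δ) * ((M : ℝ) / N) * n ≤ ((s ∩ Finset.range M).card : ℝ))).card : ℝ))
        * Real.exp (t * ((1 + δ) * ((M : ℝ) / N) * n))
        ≤ (N.choose n : ℝ) * Real.exp ((n:ℝ) * ((M:ℝ)/N * (Real.exp t - 1))) := by
      calc _ ≤ ∑ s ∈ (Finset.range N).powersetCard n,
            Real.exp (t * ((s ∩ Finset.range M).card : ℝ)) := hmark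
        _ ≤ (N.choose n : ℝ) * (1 + (M:ℝ)/N * (Real.exp t - 1)) ^ n := hmgf
        _ ≤ _ := mul_le_mul_of_nonneg_left hpow hchoose0.le
    exact le_of_mul_le_mul_right (hfinal.trans h11) hexpa
  · -- lower tail
    have hR' : Finset.range N \ Finset.range M ⊆ Finset.range N := Finset.sdiff_subset
    have hcardR' : (((Finset.range N \ Finset.range M).card : ℕ) : ℝ) = (N:ℝ) - M := by
      rw [Finset.card_sdiff_of_subset hRM, Finset.card_range, Finset.card_range, Nat.cast_sub hM]
    have hsplit : ∀ s ∈ (Finset.range N).powersetCard n,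
        ((s ∩ Finset.range M).card : ℝ)
          + ((s ∩ (Finset.range N \ Finset.range M)).card : ℝ) = (n:ℝ) := by
      intro s hs
      rw [Finset.mem_powersetCard] at hs
      have h1 : s ∩ (Finset.range N \ Finset.range M) = s \ Finset.range M := by
        ext a
        simp only [Finset.mem_inter, Finset.mem_sdiff]
        exact ⟨fun ⟨h, _, hb⟩ => ⟨h, hb⟩, fun ⟨h, hb⟩ => ⟨h, hs.1 h, hb⟩⟩
      rw [h1, ← Nat.cast_add, Finset.card_inter_add_card_sdiff, hs.2]
    have hmark := markov_exp (Ω := (Finset.range N).powersetCard n)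
      (fun s => -(δ * ((s ∩ Finset.range M).card : ℝ)))
      (fun s => ((s ∩ Finset.range M).card : ℝ) ≤ (1 - δ) * ((M : ℝ) / N) * n)
      (-(δ * ((1 - δ) * ((M : ℝ) / N) * n)))
      (fun s hs => neg_le_neg (mul_le_mul_of_nonneg_left (Finset.mem_filter.1 hs).2 hδ0))
    have hmgf := exp_mgf_bound hn hR' δ hδ0
    have hsum : ∑ s ∈ (Finset.range N).powersetCard n,
        Real.exp (-(δ * ((s ∩ Finset.range M).card : ℝ)))
        = Real.exp ((n:ℝ) * (-δ)) * ∑ s ∈ (Finset.range N).powersetCard n,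
            Real.exp (δ * ((s ∩ (Finset.range N \ Finset.range M)).card : ℝ)) := by
      rw [Finset.mul_sum]
      refine Finset.sum_congr rfl fun s hs => ?_
      rw [← Real.exp_add]
      congr 1
      have h2 := hsplit s hs
      have h3 : ((s ∩ Finset.range M).card : ℝ)
          = (n:ℝ) - ((s ∩ (Finset.range N \ Finset.range M)).card : ℝ) := by linarith
      rw [h3]
      ring
    have hchoose0 : (0:ℝ) < (N.choose n : ℝ) := by exact_mod_cast Nat.choose_pos hn
    -- base manipulation
    have hbeq : Real.exp (-δ) * (1 + ((N:ℝ) - M)/N * (Real.exp δ - 1))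
        = 1 - (M:ℝ)/N * (1 - Real.exp (-δ)) := by
      rw [Real.exp_neg]
      have he : Real.exp δ ≠ 0 := (Real.exp_pos δ).ne'
      field_simp
      ring
    have hE1 : Real.exp (-δ) ≤ 1 := by
      rw [← Real.exp_zero]
      exact Real.exp_le_exp.2 (by linarith)
    have hE0 : (0:ℝ) < Real.exp (-δ) := Real.exp_pos _
    have hbase0 : (0:ℝ) ≤ 1 - (M:ℝ)/N * (1 - Real.exp (-δ)) := by nlinarith
    have hbase : 1 - (M:ℝ)/N * (1 - Real.exp (-δ))
        ≤ Real.exp (-((M:ℝ)/N * (1 - Real.exp (-δ)))) := by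
      nlinarith [Real.add_one_le_exp (-((M:ℝ)/N * (1 - Real.exp (-δ))))]
    have hchain : (((((Finset.range N).powersetCard n).filter
        (fun s => ((s ∩ Finset.range M).card : ℝ) ≤ (1 - δ) * ((M : ℝ) / N) * n)).card : ℝ))
        * Real.exp (-(δ * ((1 - δ) * ((M : ℝ) / N) * n)))
        ≤ (N.choose n : ℝ) * Real.exp ((n:ℝ) * (-((M:ℝ)/N * (1 - Real.exp (-δ))))) := by
      calc _ ≤ ∑ s ∈ (Finset.range N).powersetCard n,
            Real.exp (-(δ * ((s ∩ Finset.range M).card : ℝ))) := hmark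
        _ = Real.exp ((n:ℝ) * (-δ)) * ∑ s ∈ (Finset.range N).powersetCard n,
            Real.exp (δ * ((s ∩ (Finset.range N \ Finset.range M)).card : ℝ)) := hsum
        _ ≤ Real.exp ((n:ℝ) * (-δ)) * ((N.choose n : ℝ)
            * (1 + (((Finset.range N \ Finset.range M).card : ℝ)
                / N) * (Real.exp δ - 1)) ^ n) :=
            mul_le_mul_of_nonneg_left hmgf (Real.exp_pos _).le
        _ = (N.choose n : ℝ)
            * (Real.exp (-δ) * (1 + ((N:ℝ) - M)/N * (Real.exp δ - 1))) ^ n := by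
            rw [hcardR', Real.exp_nat_mul, mul_pow]
            ring
        _ = (N.choose n : ℝ) * (1 - (M:ℝ)/N * (1 - Real.exp (-δ))) ^ n := by rw [hbeq]
        _ ≤ (N.choose n : ℝ) * Real.exp (-((M:ℝ)/N * (1 - Real.exp (-δ)))) ^ n :=
            mul_le_mul_of_nonneg_left (pow_le_pow_left₀ hbase0 hbase n) hchoose0.le
        _ = _ := by rw [← Real.exp_nat_mul]
    -- analytic key
    have hexp2 : Real.exp (-δ) ≤ 1 - δ + δ^2/2 := by
      have habs : |(-δ)| ≤ 1 := by rw [abs_neg, abs_of_nonneg hδ0]; exact hδ1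
      have h := Real.exp_bound habs (n := 4) (by norm_num)
      rw [Finset.sum_range_succ, Finset.sum_range_succ, Finset.sum_range_succ,
        Finset.sum_range_succ, Finset.sum_range_zero, abs_neg, abs_of_nonneg hδ0] at h
      have h' := (abs_le.1 h).2
      norm_num [Nat.factorial] at h'
      nlinarith [pow_nonneg hδ0 3, h', hδ1]
    have key2 : -(1 - Real.exp (-δ)) + δ*(1-δ) + δ^2/2 ≤ 0 := by nlinarith [hexp2]
    have hkeyn2 : (n:ℝ) * (-((M:ℝ)/N * (1 - Real.exp (-δ))))
        ≤ -(δ ^ 2 * ((M : ℝ) / N) * n) / 2 + (-(δ * ((1 - δ) * ((M : ℝ) / N) * n))) := by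
      have h10 : ((M:ℝ)/N * n) * (-(1 - Real.exp (-δ)) + δ*(1-δ) + δ^2/2) ≤ 0 :=
        mul_nonpos_of_nonneg_of_nonpos hpn key2
      have h12 : ((M:ℝ)/N * n) * (-(1 - Real.exp (-δ)) + δ*(1-δ) + δ^2/2)
          = (n:ℝ) * (-((M:ℝ)/N * (1 - Real.exp (-δ))))
            - (-(δ ^ 2 * ((M : ℝ) / N) * n) / 2 + (-(δ * ((1 - δ) * ((M : ℝ) / N) * n)))) := by
        ring
      linarith [h10, h12]
    have hexpa : (0:ℝ) < Real.exp (-(δ * ((1 - δ) * ((M : ℝ) / N) * n))) := Real.exp_pos _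
    rw [div_le_iff₀ hD, hΩ]
    have h11 : (N.choose n:ℝ) * Real.exp ((n:ℝ) * (-((M:ℝ)/N * (1 - Real.exp (-δ)))))
        ≤ (Real.exp (-(δ^2*((M:ℝ)/N)*n)/2) * (N.choose n:ℝ))
            * Real.exp (-(δ * ((1 - δ) * ((M : ℝ) / N) * n))) := by
      calc (N.choose n:ℝ) * Real.exp ((n:ℝ) * (-((M:ℝ)/N * (1 - Real.exp (-δ)))))
          ≤ (N.choose n:ℝ) * Real.exp (-(δ^2*((M:ℝ)/N)*n)/2
              + (-(δ * ((1 - δ) * ((M : ℝ) / N) * n)))) :=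
            mul_le_mul_of_nonneg_left (Real.exp_le_exp.2 hkeyn2) hchoose0.le
        _ = _ := by rw [Real.exp_add]; ring
    exact le_of_mul_le_mul_right (hchain.trans h11) hexpa
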